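/- Let K be a complete discretely valued field whose residue field is algebraically closed of characteristic p > 0. Let e ≥ 1 be an integer prime to p, π a uniformizer of K, and K̃ = K(π̃) with π̃^e = π; then K̃/K is a cyclic Galois totally ramified extension of degree e with group Γ. Let V be a finite-dimensional K-vector space and Λ̃ an 𝒪_{K̃}-lattice in V ⊗_K K̃ which is stable under the semilinear action of Γ. For 0 ≤ i ≤ e−1 set Λ_i = (π̃^i Λ̃)^Γ, an 𝒪_K-lattice in V. Then for every g ∈ GL_K(V), the K̃-linear extension g ⊗ 1 maps Λ̃ into itself (i.e. g ⊗ 1 ∈ GL(Λ̃)) if and only if g(Λ_i) = Λ_i for all 0 ≤ i ≤ e−1. -/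

import Mathlib

open IsLocalRing Polynomial
-- Aux lemma: primitive e-th root of unity in a complete DVR with alg closed residue field
lemma aux_root (p : ℕ) (hp : 0 < p) (A : Type*) [CommRing A] [IsDomain A] [IsDiscreteValuationRing A]
    (hcomplete : IsAdicComplete (IsLocalRing.maximalIdeal A) A)
    (hres : IsAlgClosed (IsLocalRing.ResidueField A))
    (hchar : CharP (IsLocalRing.ResidueField A) p)
    (e : ℕ) (he : 0 < e) (hep : Nat.Coprime e p) :
    (∃ ζ : A, IsPrimitiveRoot ζ e) ∧ IsUnit (e : A) := by
  haveI := hcomplete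
  haveI : NeZero p := ⟨hp.ne'⟩
  have hpp : p.Prime := (CharP.char_is_prime_of_pos (ResidueField A) p).out
  have hpe : ¬ (p ∣ e) := by
    intro hd
    have h1 : p ∣ 1 := hep ▸ Nat.dvd_gcd hd dvd_rfl
    have := Nat.le_of_dvd one_pos h1
    have := hpp.one_lt
    omega
  have hek : (e : ResidueField A) ≠ 0 := by
    rw [Ne, CharP.cast_eq_zero_iff (ResidueField A) p]; exact hpe
  haveI : NeZero ((e : ResidueField A)) := ⟨hek⟩
  -- e is a unit in A
  have heA : IsUnit (e : A) := by
    by_contra h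
    have hm : (e : A) ∈ maximalIdeal A := h
    have : (e : ResidueField A) = 0 := by
      have := Ideal.Quotient.eq_zero_iff_mem.mpr hm
      simp at this; exact this
    exact hek this
  refine ⟨?_, heA⟩
  obtain ⟨ζ₀, hζ₀⟩ := HasEnoughRootsOfUnity.exists_primitiveRoot (ResidueField A) e
  obtain ⟨a₀, ha₀⟩ := Ideal.Quotient.mk_surjective (I := maximalIdeal A) ζ₀
  have hh := IsAdicComplete.henselianRing A (maximalIdeal A)
  obtain ⟨a, ha, hres'⟩ := hh.is_henselian (X ^ e - 1) (monic_X_pow_sub_C 1 he.ne') a₀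
    (by
      have : Ideal.Quotient.mk (maximalIdeal A) ((X ^ e - 1 : A[X]).eval a₀) = 0 := by
        simp [ha₀, hζ₀.pow_eq_one]; exact sub_eq_zero.mpr hζ₀.pow_eq_one
      exact Ideal.Quotient.eq_zero_iff_mem.mp this)
    (by
      have hd : (Ideal.Quotient.mk (maximalIdeal A)) ((X ^ e - 1 : A[X]).derivative.eval a₀)
          = (e : ResidueField A) * ζ₀ ^ (e - 1) := by
        simp [derivative_X_pow, ha₀]; rfl
      rw [hd]
      exact (mul_ne_zero hek (pow_ne_zero _ (hζ₀.ne_zero he.ne'))).isUnit)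
  -- a is a primitive e-th root
  have hae : a ^ e = 1 := by
    have := ha
    simp only [IsRoot, eval_sub, eval_pow, eval_X, eval_one, sub_eq_zero] at this
    exact this
  have hresa : Ideal.Quotient.mk (maximalIdeal A) a = ζ₀ := by
    have := Ideal.Quotient.eq_zero_iff_mem.mpr hres'
    rw [map_sub] at this
    rw [ha₀] at this
    exact sub_eq_zero.mp this
  refine ⟨a, IsPrimitiveRoot.mk_of_lt a he hae ?_⟩
  intro l hl0 hle hal
  have : ζ₀ ^ l = 1 := by
    have h := congrArg (Ideal.Quotient.mk (maximalIdeal A)) hal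
    rw [map_pow, map_one, hresa] at h; exact h
  have := hζ₀.dvd_of_pow_eq_one l this
  have := Nat.le_of_dvd hl0 this
  omega
open IsLocalRing Polynomial
lemma aux_gamma (A : Type*) [CommRing A] [IsDomain A] [IsDiscreteValuationRing A]
    (K : Type*) [Field K] [Algebra A K] [IsFractionRing A K]
    (e : ℕ) (he : 0 < e) (π : A) (hπ : Irreducible π)
    (K' : Type*) [Field K'] [Algebra K K'] [Algebra A K'] [IsScalarTower A K K']
    (π' : K') (hπ' : π' ^ e = algebraMap K K' (algebraMap A K π))
    (hgen : Algebra.adjoin K {π'} = ⊤)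
    (ζK : K) (hζ : ζK ^ e = 1) :
    FiniteDimensional K K' ∧ ∃ γ : K' ≃ₐ[K] K', γ π' = algebraMap K K' ζK * π' := by
  -- the Eisenstein polynomial over A
  set fA : A[X] := X ^ e - C π with hfA
  have hmonicA : fA.Monic := monic_X_pow_sub_C π he.ne'
  have hπ0 : π ≠ 0 := hπ.ne_zero
  have hprime : Prime π := UniqueFactorizationMonoid.irreducible_iff_prime.mp hπ
  have hP : (Ideal.span {π}).IsPrime := (Ideal.span_singleton_prime hπ0).mpr hprime
  have hdeg : fA.degree = e := by
    simpa [hfA] using degree_X_pow_sub_C he π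
  have hirrA : Irreducible fA := by
    apply Polynomial.irreducible_of_eisenstein_criterion hP
    · rw [hmonicA.leadingCoeff]
      intro h1
      exact hP.ne_top (Ideal.eq_top_of_isUnit_mem _ h1 isUnit_one)
    · intro n hn
      rw [hdeg] at hn
      have hn' : n < e := by exact_mod_cast hn
      simp only [hfA, coeff_sub, coeff_X_pow, coeff_C]
      rcases eq_or_ne n 0 with rfl | h0
      · simp only [if_neg (by omega : ¬ (0 = e)), if_pos rfl, zero_sub]
        exact neg_mem (Ideal.subset_span rfl)
      · simp [if_neg (by omega : ¬ (n = e)), if_neg h0]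
    · rw [hdeg]; exact_mod_cast he
    · have hcoeff0 : fA.coeff 0 = -π := by
        simp [hfA, coeff_X_pow, he.ne']
        omega
      rw [hcoeff0, Ideal.span_singleton_pow, Ideal.neg_mem_iff, Ideal.mem_span_singleton]
      intro hdvd
      obtain ⟨c, hc⟩ := hdvd
      have hz : π * (1 - π * c) = 0 := by
        rw [mul_sub, mul_one, ← mul_assoc, ← sq, ← hc, sub_self]
      rcases mul_eq_zero.mp hz with h | h
      · exact hπ0 h
      · exact hπ.not_isUnit (IsUnit.of_mul_eq_one _ (sub_eq_zero.mp h).symm)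
    · exact hmonicA.isPrimitive
  -- pass to K
  set q : K[X] := X ^ e - C (algebraMap A K π) with hq
  have hmapq : fA.map (algebraMap A K) = q := by
    simp [hfA, hq, Polynomial.map_sub, Polynomial.map_pow]
  have hmonicq : q.Monic := monic_X_pow_sub_C _ he.ne'
  have hirrq : Irreducible q := by
    rw [← hmapq]
    exact (hmonicA.irreducible_iff_irreducible_map_fraction_map).mp hirrA
  have haevalq : (aeval π') q = 0 := by
    simp [hq, hπ', sub_self]
  have hminq : minpoly K π' = q := (minpoly.eq_of_irreducible_of_monic hirrq haevalq hmonicq).symm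
  have hint : IsIntegral K π' := ⟨q, hmonicq, haevalq⟩
  -- power basis
  let pb : PowerBasis K K' := (Algebra.adjoin.powerBasis hint).map
    ((Subalgebra.equivOfEq _ _ hgen).trans Subalgebra.topEquiv)
  have hgenpb : pb.gen = π' := by
    simp [pb, Algebra.adjoin.powerBasis_gen]
  haveI hfd : FiniteDimensional K K' := Module.Finite.of_basis pb.basis
  refine ⟨hfd, ?_⟩
  -- the lift
  have hroot : (aeval (algebraMap K K' ζK * π')) (minpoly K pb.gen) = 0 := by
    have hz1 : (algebraMap K K' ζK) ^ e = 1 := by rw [← map_pow, hζ, map_one]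
    rw [hgenpb, hminq, hq, map_sub, map_pow, aeval_X, aeval_C, mul_pow, hz1, one_mul, hπ',
      sub_self]
  let f : K' →ₐ[K] K' := pb.lift (algebraMap K K' ζK * π') hroot
  have hfbij : Function.Bijective f := by
    have hinj : Function.Injective f := f.toRingHom.injective
    exact ⟨hinj, (LinearMap.injective_iff_surjective (f := f.toLinearMap)).mp hinj⟩
  refine ⟨AlgEquiv.ofBijective f hfbij, ?_⟩
  show f π' = _
  rw [← hgenpb]
  exact pb.lift_gen _ hroot



/-- Let `K` be a complete discretely valued field (fraction field of a complete DVR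
`A = 𝒪_K`) whose residue field is algebraically closed of characteristic `p > 0`.
Let `e ≥ 1` be prime to `p`, `π` a uniformizer of `K`, and `K̃ = K(π̃)` with
`π̃^e = π`.  Let `V` be a finite-dimensional `K`-vector space, realize
`V ⊗_K K̃` as a `K̃`-vector space `W` with a `K`-embedding `ι : V → W` spanning `W`
over `K̃`, carrying the semilinear action `σ` of `Γ = Gal(K̃/K)` fixing `ι(V)`, and let
`Λ̃ ⊆ W` be a `Γ`-stable `𝒪_{K̃}`-lattice (`𝒪_{K̃}` the integral closure of `A` in
`K̃`).  For `0 ≤ i ≤ e-1` set `Λ_i = (π̃^i Λ̃)^Γ = {v ∈ V : ι v ∈ π̃^i Λ̃}`, an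
`𝒪_K`-lattice in `V`.  Then for every `g ∈ GL_K(V)`, the `K̃`-linear extension
`g ⊗ 1` maps `Λ̃` into itself (i.e. `g ⊗ 1 ∈ GL(Λ̃)`) if and only if `g(Λ_i) = Λ_i`
for all `0 ≤ i ≤ e-1`. -/
theorem statement12
    (p : ℕ) (hp : 0 < p)
    -- `A = 𝒪_K`, a complete discrete valuation ring ...
    (A : Type*) [CommRing A] [IsDomain A] [IsDiscreteValuationRing A]
    (hcomplete : IsAdicComplete (IsLocalRing.maximalIdeal A) A)
    -- ... whose residue field is algebraically closed of characteristic `p`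
    (hres : IsAlgClosed (IsLocalRing.ResidueField A))
    (hchar : CharP (IsLocalRing.ResidueField A) p)
    -- `K = Frac(A)`
    (K : Type*) [Field K] [Algebra A K] [IsFractionRing A K]
    -- `e ≥ 1` prime to `p`, `π` a uniformizer of `K`
    (e : ℕ) (he : 0 < e) (hep : Nat.Coprime e p)
    (π : A) (hπ : Irreducible π)
    -- `K̃ = K(π̃)` with `π̃^e = π`
    (K' : Type*) [Field K'] [Algebra K K'] [Algebra A K'] [IsScalarTower A K K']
    (π' : K') (hπ' : π' ^ e = algebraMap K K' (algebraMap A K π))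
    (hgen : Algebra.adjoin K {π'} = ⊤)
    -- a finite-dimensional `K`-vector space `V`
    (V : Type*) [AddCommGroup V] [Module K V] [FiniteDimensional K V]
    -- `W = V ⊗_K K̃` with the embedding `ι : V = V ⊗ 1 → W`
    (W : Type*) [AddCommGroup W] [Module K' W] [Module K W] [IsScalarTower K K' W]
    (ι : V →ₗ[K] W) (hι : Function.Injective ι)
    (hspan : Submodule.span K' (Set.range ι) = ⊤)
    -- the semilinear action of `Γ = Gal(K̃/K)` on `W = V ⊗_K K̃` through the second
    -- factor: it fixes `ι(V)` pointwise
    (σ : (K' ≃ₐ[K] K') → W ≃+ W)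
    (hσ_semilinear : ∀ γ (a : K') (w : W), σ γ (a • w) = γ a • σ γ w)
    (hσ_mul : ∀ γ₁ γ₂ (w : W), σ (γ₁ * γ₂) w = σ γ₁ (σ γ₂ w))
    (hσ_one : ∀ w : W, σ 1 w = w)
    (hσ_fix : ∀ γ (v : V), σ γ (ι v) = ι v)
    -- `Λ̃`: a `Γ`-stable `𝒪_{K̃}`-lattice in `W`
    (Λ : Submodule (integralClosure A K') W)
    (hΛfg : Λ.FG)
    (hΛspan : Submodule.span K' (Λ : Set W) = ⊤)
    (hΛstable : ∀ γ, ∀ w ∈ Λ, σ γ w ∈ Λ)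
    -- `g ∈ GL_K(V)` and its `K̃`-linear extension `G = g ⊗ 1` to `W`
    (g : V ≃ₗ[K] V) (G : W →ₗ[K'] W) (hG : ∀ v, G (ι v) = ι (g v)) :
    (G '' (Λ : Set W) = (Λ : Set W)) ↔
      ∀ i : ℕ, i < e →
        (fun v => g v) '' {v : V | ∃ w ∈ Λ, ι v = π' ^ i • w}
          = {v : V | ∃ w ∈ Λ, ι v = π' ^ i • w} := by
    classical
  -- basic nonvanishing
  have hπK0 : algebraMap A K π ≠ 0 := fun h =>
    hπ.ne_zero ((map_eq_zero_iff _ (IsFractionRing.injective A K)).mp h)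
  have hπ'0 : π' ≠ 0 := by
    intro h
    rw [h, zero_pow he.ne'] at hπ'
    exact hπK0 ((map_eq_zero_iff _ (algebraMap K K').injective).mp hπ'.symm)
  -- W is finite dimensional over K'
  obtain ⟨s, hs⟩ := Module.finite_def.mp ‹FiniteDimensional K V›
  haveI hWfin : Module.Finite K' W := by
    refine ⟨⟨s.image ι, ?_⟩⟩
    rw [Finset.coe_image, eq_top_iff, ← hspan]
    apply Submodule.span_le.mpr
    rintro _ ⟨v, rfl⟩
    have hv : v ∈ Submodule.span K (s : Set V) := hs ▸ Submodule.mem_top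
    have h2 : ι v ∈ Submodule.map ι (Submodule.span K (s : Set V)) :=
      Submodule.mem_map_of_mem hv
    rw [Submodule.map_span] at h2
    exact Submodule.span_le_restrictScalars K K' _ h2
  -- G is bijective
  have hGsurj : Function.Surjective G := by
    rw [← LinearMap.range_eq_top, eq_top_iff, ← hspan]
    apply Submodule.span_le.mpr
    rintro _ ⟨v, rfl⟩
    exact ⟨ι (g.symm v), by rw [hG, g.apply_symm_apply]⟩
  have hGinj : Function.Injective G := (LinearMap.injective_iff_surjective).mpr hGsurj
  let Geq : W ≃ₗ[K'] W := LinearEquiv.ofBijective G ⟨hGinj, hGsurj⟩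
  have hGeq : ∀ w, Geq w = G w := fun w => rfl
  have hGinv : ∀ v, Geq.symm (ι v) = ι (g.symm v) := by
    intro v
    apply hGinj
    have h1 : G (Geq.symm (ι v)) = ι v := Geq.apply_symm_apply (ι v)
    rw [h1, hG, g.apply_symm_apply]
  constructor
  · -- forward direction
    intro hGΛ i hi
    ext v
    simp only [Set.mem_image, Set.mem_setOf_eq]
    constructor
    · rintro ⟨u, ⟨w, hwΛ, hw⟩, rfl⟩
      refine ⟨G w, ?_, ?_⟩
      · have : G w ∈ G '' (Λ : Set W) := ⟨w, hwΛ, rfl⟩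
        rwa [hGΛ] at this
      · rw [← hG, hw, map_smul]
    · rintro ⟨w, hwΛ, hw⟩
      have hwim : w ∈ G '' (Λ : Set W) := by rw [hGΛ]; exact hwΛ
      obtain ⟨u, huΛ, hu⟩ := hwim
      have hsymmw : Geq.symm w = u := by
        apply hGinj
        have h2 := Geq.apply_symm_apply w
        rw [hGeq] at h2
        rw [h2, hu]
      refine ⟨g.symm v, ⟨u, huΛ, ?_⟩, g.apply_symm_apply v⟩
      rw [← hGinv, hw, map_smul, hsymmw]
  · -- reverse direction
    intro hS
    obtain ⟨⟨ζA, hζA⟩, heU⟩ := aux_root p hp A hcomplete hres hchar e he hep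
    have hζAe : ζA ^ e = 1 := hζA.pow_eq_one
    set ζK : K := algebraMap A K ζA with hζKdef
    have hζK : IsPrimitiveRoot ζK e := hζA.map_of_injective (IsFractionRing.injective A K)
    have hζKe : ζK ^ e = 1 := by rw [hζKdef, ← map_pow, hζAe, map_one]
    obtain ⟨hfdK', γ, hγ⟩ := aux_gamma A K e he π hπ K' π' hπ' hgen ζK hζKe
    set ζ' : K' := algebraMap K K' ζK with hζ'def
    have hζ' : IsPrimitiveRoot ζ' e := hζK.map_of_injective (algebraMap K K').injective
    have hζ'e : ζ' ^ e = 1 := hζ'.pow_eq_one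
    have hζ'0 : ζ' ≠ 0 := hζ'.ne_zero he.ne'
    -- γ^j on π'
    have hγj : ∀ j : ℕ, (γ ^ j) π' = ζ' ^ j * π' := by
      intro j
      induction j with
      | zero => simp
      | succ n ih =>
        rw [pow_succ, AlgEquiv.mul_apply, hγ, map_mul, ih]
        have hc : (γ ^ n) (algebraMap K K' ζK) = algebraMap K K' ζK := AlgEquiv.commutes _ _
        rw [hζ'def, hc, pow_succ]
        ring
    -- σ is K-linear
    have hσ_K : ∀ (γ' : K' ≃ₐ[K] K') (a : K) (w : W), σ γ' (a • w) = a • σ γ' w := by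
      intro γ' a w
      rw [← IsScalarTower.algebraMap_smul K' a w, hσ_semilinear, AlgEquiv.commutes,
        IsScalarTower.algebraMap_smul]
    have hσ_linear : ∀ (γ' : K' ≃ₐ[K] K'), IsLinearMap K (σ γ') := fun γ' =>
      ⟨map_add _, fun a w => hσ_K γ' a w⟩
    -- e is invertible
    have heK0 : (e : K) ≠ 0 := by
      rw [← map_natCast (algebraMap A K) e]
      exact fun h => heU.ne_zero ((map_eq_zero_iff _ (IsFractionRing.injective A K)).mp h)
    obtain ⟨u, hu⟩ := heU
    have heinv : (e : K)⁻¹ = algebraMap A K ((u⁻¹ : Aˣ) : A) := by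
      apply inv_eq_of_mul_eq_one_right
      rw [← map_natCast (algebraMap A K) e, ← map_mul, ← hu, Units.mul_inv, map_one]
    -- ζK⁻¹ as image of A
    have hξA : ζK⁻¹ = algebraMap A K (ζA ^ (e - 1)) := by
      apply inv_eq_of_mul_eq_one_right
      have h2 : ζA * ζA ^ (e - 1) = 1 := by
        rw [← pow_succ', Nat.sub_add_cancel he, hζAe]
      rw [hζKdef, ← map_mul, h2, map_one]
    -- A-scalars preserve Λ
    have hAsmul : ∀ (a : A) (w : W), w ∈ Λ → (algebraMap A K a) • w ∈ Λ := by
      intro a w hw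
      have h1 : (algebraMap A K a) • w = (algebraMap A K' a) • w := by
        rw [IsScalarTower.algebraMap_apply A K K',
          IsScalarTower.algebraMap_smul K' (algebraMap A K a) w]
      rw [h1]
      exact Λ.smul_mem (⟨algebraMap A K' a, Subalgebra.algebraMap_mem _ a⟩ :
        integralClosure A K') hw
    -- the projectors
    let Sja : (K' ≃ₐ[K] K') → W →ₗ[K] W := fun γ' => (hσ_linear γ').mk' _
    let Ei : ℕ → W →ₗ[K] W := fun i =>
      (e : K)⁻¹ • (∑ j ∈ Finset.range e, (ζK⁻¹ ^ (i * j)) • Sja (γ ^ j))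
    have hEapply : ∀ i w, Ei i w
        = (e : K)⁻¹ • ∑ j ∈ Finset.range e, (ζK⁻¹ ^ (i * j)) • σ (γ ^ j) w := by
      intro i w
      simp [Ei, Sja, LinearMap.sum_apply, IsLinearMap.mk'_apply]
    -- geometric sum lemmas
    have hgeomK : ∀ r : K, r ^ e = 1 → r ≠ 1 → ∑ i ∈ Finset.range e, r ^ i = 0 := by
      intro r hre hr1
      rw [geom_sum_eq hr1 e, hre, sub_self, zero_div]
    have hgeomK' : ∀ r : K', r ^ e = 1 → r ≠ 1 → ∑ i ∈ Finset.range e, r ^ i = 0 := by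
      intro r hre hr1
      rw [geom_sum_eq hr1 e, hre, sub_self, zero_div]
    -- projectors preserve Λ
    have hEmem : ∀ i (w : W), w ∈ Λ → Ei i w ∈ Λ := by
      intro i w hw
      rw [hEapply]
      have hsum : (∑ j ∈ Finset.range e, (ζK⁻¹ ^ (i * j)) • σ (γ ^ j) w) ∈ Λ := by
        apply Submodule.sum_mem
        intro j _
        rw [hξA, ← map_pow]
        exact hAsmul _ _ (hΛstable (γ ^ j) w hw)
      rw [heinv]
      exact hAsmul _ _ hsum
    -- decomposition of the identity
    have hdecomp : ∀ w : W, ∑ i ∈ Finset.range e, Ei i w = w := by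
      intro w
      have hswap : ∑ i ∈ Finset.range e, Ei i w
          = (e : K)⁻¹ • ∑ j ∈ Finset.range e,
              (∑ i ∈ Finset.range e, ζK⁻¹ ^ (i * j)) • σ (γ ^ j) w := by
        simp only [hEapply]
        rw [← Finset.smul_sum]
        congr 1
        rw [Finset.sum_comm]
        apply Finset.sum_congr rfl
        intro j _
        rw [← Finset.sum_smul]
      rw [hswap]
      have hinner : ∀ j ∈ Finset.range e,
          (∑ i ∈ Finset.range e, ζK⁻¹ ^ (i * j)) • σ (γ ^ j) w
            = if j = 0 then (e : K) • σ (γ ^ j) w else 0 := by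
        intro j hj
        rw [Finset.mem_range] at hj
        rcases eq_or_ne j 0 with rfl | hj0
        · simp
        · rw [if_neg hj0]
          have h1 : (∑ i ∈ Finset.range e, ζK⁻¹ ^ (i * j)) = 0 := by
            have : ∀ i, ζK⁻¹ ^ (i * j) = (ζK⁻¹ ^ j) ^ i := by
              intro i; rw [← pow_mul, mul_comm]
            simp only [this]
            apply hgeomK
            · rw [← pow_mul, mul_comm, pow_mul, inv_pow, hζKe, inv_one, one_pow]
            · intro h1
              rw [inv_pow, inv_eq_one] at h1
              have := Nat.le_of_dvd (Nat.pos_of_ne_zero hj0) (hζK.dvd_of_pow_eq_one j h1)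
              omega
          rw [h1, zero_smul]
      rw [Finset.sum_congr rfl hinner, Finset.sum_ite_eq' (Finset.range e) 0
        (fun j => (e : K) • σ (γ ^ j) w), if_pos (Finset.mem_range.mpr he), pow_zero]
      rw [hσ_one, smul_smul, inv_mul_cancel₀ heK0, one_smul]
    -- graded pieces and spanning
    have hsm : ∀ (c : K) (x : W), c • x = (algebraMap K K' c) • x := fun c x =>
      (IsScalarTower.algebraMap_smul K' c x).symm
    -- K' is spanned over K by powers π'^m, m < e
    have hT0 : ∀ c : K', c ∈ Submodule.span K (Set.range fun m : Fin e => π' ^ (m : ℕ)) := by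
      set T0 := Submodule.span K (Set.range fun m : Fin e => π' ^ (m : ℕ)) with hT0def
      have hpowmem : ∀ m, m < e → π' ^ m ∈ T0 := fun m hm =>
        Submodule.subset_span ⟨⟨m, hm⟩, rfl⟩
      have hmulgen : ∀ a, a < e → ∀ b, b < e → π' ^ a * π' ^ b ∈ T0 := by
        intro a ha b hb
        rw [← pow_add]
        rcases lt_or_ge (a + b) e with h | h
        · exact hpowmem _ h
        · have hsplit : a + b = (a + b - e) + e := by omega
          rw [hsplit, pow_add, hπ']
          have h2 : π' ^ (a + b - e) * algebraMap K K' (algebraMap A K π)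
              = (algebraMap A K π) • π' ^ (a + b - e) := by
            rw [Algebra.smul_def]; ring
          rw [h2]
          exact T0.smul_mem _ (hpowmem _ (by omega))
      have hπ'T0 : π' ∈ T0 := by
        rcases Nat.lt_or_ge 1 e with h | h
        · simpa using hpowmem 1 h
        · have he1 : e = 1 := by omega
          have : π' = (algebraMap A K π) • π' ^ 0 := by
            rw [pow_zero, Algebra.smul_def, mul_one, ← hπ', he1, pow_one]
          rw [this]
          exact T0.smul_mem _ (hpowmem 0 he)
      intro c
      have hc : c ∈ Algebra.adjoin K {π'} := hgen ▸ Algebra.mem_top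
      induction hc using Algebra.adjoin_induction with
      | mem x hx =>
        rw [Set.mem_singleton_iff] at hx
        subst hx; exact hπ'T0
      | algebraMap r =>
        have h1 : algebraMap K K' r = r • (π' ^ 0) := by
          rw [pow_zero, Algebra.smul_def, mul_one]
        rw [h1]
        exact T0.smul_mem r (hpowmem 0 he)
      | add x y hx hy hx' hy' => exact T0.add_mem hx' hy'
      | mul x y hx hy hx' hy' =>
        have hle : T0 * T0 ≤ T0 := by
          rw [hT0def, Submodule.span_mul_span]
          apply Submodule.span_le.mpr
          rintro _ ⟨_, ⟨⟨a, ha⟩, rfl⟩, _, ⟨⟨b, hb⟩, rfl⟩, rfl⟩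
          exact hmulgen a ha b hb
        exact hle (Submodule.mul_mem_mul hx' hy')
    -- W is spanned over K by π'^m • ι v, m < e
    set gensW : Set W := {w : W | ∃ m, m < e ∧ ∃ v : V, w = π' ^ m • ι v} with hgensWdef
    set TW := Submodule.span K gensW with hTWdef
    have hgensmem : ∀ m, m < e → ∀ v : V, π' ^ m • ι v ∈ TW := fun m hm v =>
      Submodule.subset_span ⟨m, hm, v, rfl⟩
    have hTWsmul : ∀ (c : K') (x : W), x ∈ TW → c • x ∈ TW := by
      intro c x hx
      induction hx using Submodule.span_induction with
      | mem x hxm =>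
        obtain ⟨m, hm, v, rfl⟩ := hxm
        have hc := hT0 c
        induction hc using Submodule.span_induction with
        | mem c hcmem =>
          obtain ⟨⟨k, hk⟩, rfl⟩ := hcmem
          rw [smul_smul, ← pow_add]
          rcases lt_or_ge (k + m) e with h | h
          · exact hgensmem _ h v
          · have hsplit : k + m = (k + m - e) + e := by omega
            rw [hsplit, pow_add, hπ', mul_smul]
            have h2 : (algebraMap K K' (algebraMap A K π)) • ι v
                = ι ((algebraMap A K π) • v) := by
              rw [IsScalarTower.algebraMap_smul, map_smul]
            rw [h2]
            exact hgensmem _ (by omega) _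
        | zero => rw [zero_smul]; exact TW.zero_mem
        | add c d hc hd hc' hd' => rw [add_smul]; exact TW.add_mem hc' hd'
        | smul a c hc hc' => rw [smul_assoc]; exact TW.smul_mem a hc'
      | zero => rw [smul_zero]; exact TW.zero_mem
      | add x y hx hy hx' hy' => rw [smul_add]; exact TW.add_mem hx' hy'
      | smul a x hx hx' => rw [smul_comm]; exact TW.smul_mem a hx'
    have hWgens : ∀ w : W, w ∈ TW := by
      let TW' : Submodule K' W :=
        { carrier := (TW : Set W)
          add_mem' := fun hx hy => TW.add_mem hx hy
          zero_mem' := TW.zero_mem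
          smul_mem' := fun c {x} hx => hTWsmul c x hx }
      intro w
      have hle : Submodule.span K' (Set.range ι) ≤ TW' := by
        apply Submodule.span_le.mpr
        rintro _ ⟨v, rfl⟩
        show ι v ∈ TW
        simpa using hgensmem 0 he v
      rw [hspan] at hle
      exact hle trivial
    -- the projector Ei i has range in π'^i • ι(V)
    have hErange : ∀ i, i < e → ∀ w : W, ∃ v : V, Ei i w = π' ^ i • ι v := by
      intro i hi w
      have hw := hWgens w
      induction hw using Submodule.span_induction with
      | mem x hxm =>
        obtain ⟨m, hm, v, rfl⟩ := hxm
        have hσval : ∀ j : ℕ, σ (γ ^ j) (π' ^ m • ι v) = (ζ' ^ (j * m) * π' ^ m) • ι v := by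
          intro j
          rw [hσ_semilinear, hσ_fix, map_pow, hγj]
          congr 2
          rw [mul_pow, ← pow_mul]
        have hsummand : ∀ j ∈ Finset.range e, (ζK⁻¹ ^ (i * j)) • σ (γ ^ j) (π' ^ m • ι v)
            = ((ζ'⁻¹ ^ i * ζ' ^ m) ^ j) • (π' ^ m • ι v) := by
          intro j _
          rw [hσval j, hsm, smul_smul, smul_smul]
          congr 1
          rw [map_pow, map_inv₀, ← hζ'def, mul_pow, ← pow_mul, ← pow_mul]
          ring
        rw [hEapply, Finset.sum_congr rfl hsummand, ← Finset.sum_smul]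
        by_cases hmi : m = i
        · subst hmi
          have hρ : ζ'⁻¹ ^ m * ζ' ^ m = 1 := by
            rw [← mul_pow, inv_mul_cancel₀ hζ'0, one_pow]
          refine ⟨v, ?_⟩
          rw [hρ]
          simp only [one_pow, Finset.sum_const, Finset.card_range, nsmul_eq_mul, mul_one]
          rw [show ((e : K') : K') = algebraMap K K' (e : K) by rw [map_natCast], ← hsm,
            smul_smul, inv_mul_cancel₀ heK0, one_smul]
        · refine ⟨0, ?_⟩
          have hρe : (ζ'⁻¹ ^ i * ζ' ^ m) ^ e = 1 := by
            rw [mul_pow, ← pow_mul, ← pow_mul, mul_comm i e, mul_comm m e, pow_mul, pow_mul,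
              inv_pow, hζ'e, inv_one, one_pow, one_pow, one_mul]
          have hρ1 : ζ'⁻¹ ^ i * ζ' ^ m ≠ 1 := by
            intro h1
            have h2 : ζ' ^ m = ζ' ^ i := by
              have h3 := congrArg (fun x => ζ' ^ i * x) h1
              simp only [mul_one] at h3
              rw [← mul_assoc, ← mul_pow, mul_inv_cancel₀ hζ'0, one_pow, one_mul] at h3
              exact h3
            exact hmi (hζ'.pow_inj hm hi h2)
          rw [hgeomK' _ hρe hρ1, zero_smul, smul_zero, map_zero, smul_zero]
      | zero => exact ⟨0, by rw [map_zero, map_zero, smul_zero]⟩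
      | add x y hx hy hx' hy' =>
        obtain ⟨vx, hvx⟩ := hx'
        obtain ⟨vy, hvy⟩ := hy'
        exact ⟨vx + vy, by rw [map_add, hvx, hvy, map_add, smul_add]⟩
      | smul a x hx hx' =>
        obtain ⟨vx, hvx⟩ := hx'
        exact ⟨a • vx, by rw [map_smul, hvx, map_smul, smul_comm]⟩
    -- the key step
    have key : ∀ (g' : V →ₗ[K] V) (G' : W →ₗ[K'] W), (∀ v, G' (ι v) = ι (g' v)) →
        (∀ i, i < e → ∀ v : V, π' ^ i • ι v ∈ Λ → π' ^ i • ι (g' v) ∈ Λ) →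
        ∀ w ∈ Λ, G' w ∈ Λ := by
      intro g' G' hG' hstab w hw
      have hw' : G' w = ∑ i ∈ Finset.range e, G' (Ei i w) := by
        rw [← map_sum, hdecomp]
      rw [hw']
      apply Submodule.sum_mem
      intro i hi
      rw [Finset.mem_range] at hi
      obtain ⟨v, hv⟩ := hErange i hi w
      have hmem : π' ^ i • ι v ∈ Λ := by rw [← hv]; exact hEmem i w hw
      have hres2 := hstab i hi v hmem
      have hGEi : G' (Ei i w) = π' ^ i • ι (g' v) := by
        rw [hv, map_smul, hG']
      rw [hGEi]
      exact hres2
    -- translating the hypothesis about the lattices Λ_i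
    have htrans : ∀ (g' : V →ₗ[K] V),
        (∀ i, i < e → ∀ v ∈ {v : V | ∃ w ∈ Λ, ι v = π' ^ i • w},
          g' v ∈ {v : V | ∃ w ∈ Λ, ι v = π' ^ i • w}) →
        ∀ i, i < e → ∀ v : V, π' ^ i • ι v ∈ Λ → π' ^ i • ι (g' v) ∈ Λ := by
      intro g' hg' i hi v hv
      rcases Nat.eq_zero_or_pos i with rfl | hi0
      · have hv0 : v ∈ {v : V | ∃ w ∈ Λ, ι v = π' ^ 0 • w} := by
          refine ⟨ι v, by simpa using hv, by simp⟩
        obtain ⟨w', hw', hww⟩ := hg' 0 he v hv0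
        rw [pow_zero, one_smul] at hww ⊢
        rw [hww]
        exact hw'
      · have hsplit : (e - i) + i = e := by omega
        have hπE : ∀ x : W, π' ^ (e - i) • (π' ^ i • x) = (algebraMap A K π) • x := by
          intro x
          rw [← mul_smul, ← pow_add, hsplit, hπ', ← hsm]
        have hvS : (algebraMap A K π) • v ∈ {u : V | ∃ w ∈ Λ, ι u = π' ^ (e - i) • w} := by
          refine ⟨π' ^ i • ι v, hv, ?_⟩
          rw [map_smul, hπE]
        obtain ⟨w', hw', hww⟩ := hg' (e - i) (by omega) _ hvS
        rw [map_smul, map_smul, ← hπE] at hww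
        have hcan : π' ^ i • ι (g' v) = w' :=
          smul_right_injective W (pow_ne_zero (e - i) hπ'0) hww
        rw [hcan]
        exact hw'
    -- conclude
    have hsub1 : ∀ w ∈ Λ, G w ∈ Λ := by
      apply key g.toLinearMap G hG
      apply htrans
      intro i hi v hv
      have himg : g v ∈ (fun v => g v) '' {v : V | ∃ w ∈ Λ, ι v = π' ^ i • w} :=
        Set.mem_image_of_mem _ hv
      rw [hS i hi] at himg
      exact himg
    have hsub2 : ∀ w ∈ Λ, Geq.symm w ∈ Λ := by
      apply key g.symm.toLinearMap Geq.symm.toLinearMap (fun v => hGinv v)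
      apply htrans
      intro i hi v hv
      have h1 : v ∈ (fun v => g v) '' {v : V | ∃ w ∈ Λ, ι v = π' ^ i • w} := by
        rw [hS i hi]; exact hv
      obtain ⟨u, hu, huv⟩ := h1
      have h2 : g.symm v = u := by rw [← huv]; exact g.symm_apply_apply u
      show g.symm v ∈ {v : V | ∃ w ∈ Λ, ι v = π' ^ i • w}
      rw [h2]
      exact hu
    ext w
    simp only [Set.mem_image, SetLike.mem_coe]
    constructor
    · rintro ⟨x, hx, rfl⟩
      exact hsub1 x hx
    · intro hw
      refine ⟨Geq.symm w, hsub2 w hw, ?_⟩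
      have h3 := Geq.apply_symm_apply w
      rw [hGeq] at h3
      exact h3
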